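/- For n ≥ 2 and any admissible peak set S, and any σ, ρ ∈ P(S;n), the Kendall-Tau distance satisfies d_K(σ,ρ) ≤ n(n−1)/2 − 2|S|. -/
import Mathlib


/-- Hamming distance on permutations of `Fin n`. -/
def dH (n : ℕ) (σ ρ : Equiv.Perm (Fin n)) : ℕ :=
  (Finset.univ.filter (fun i => σ i ≠ ρ i)).card

/-- ℓ∞ distance on permutations of `Fin n`. -/
def dL (n : ℕ) (σ ρ : Equiv.Perm (Fin n)) : ℕ :=
  Finset.univ.sup (fun i => (((σ i : ℕ) : ℤ) - ((ρ i : ℕ) : ℤ)).natAbs)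

/-- Kendall-Tau distance: number of deranged pairs. -/
def dK (n : ℕ) (σ ρ : Equiv.Perm (Fin n)) : ℕ :=
  (Finset.univ.filter (fun p : Fin n × Fin n =>
    p.1 < p.2 ∧ (((σ p.1 : ℕ) : ℤ) - ((σ p.2 : ℕ) : ℤ)) *
      (((ρ p.1 : ℕ) : ℤ) - ((ρ p.2 : ℕ) : ℤ)) < 0)).card

/-- `τ` is an adjacent transposition `(i, i+1)`. -/
def IsAdjTrans (n : ℕ) (τ : Equiv.Perm (Fin n)) : Prop :=
  ∃ (i : ℕ) (h : i + 1 < n), τ = Equiv.swap ⟨i, Nat.lt_of_succ_lt h⟩ ⟨i + 1, h⟩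

/-- Minimal number of adjacent transpositions transforming `σ` into `ρ`
(acting by left multiplication). -/
noncomputable def dK' (n : ℕ) (σ ρ : Equiv.Perm (Fin n)) : ℕ :=
  sInf {m | ∃ L : List (Equiv.Perm (Fin n)), L.length = m ∧
    (∀ τ ∈ L, IsAdjTrans n τ) ∧ L.prod * σ = ρ}

/-- The peak set of `σ`, with 1-based positions: `j ∈ {2, …, n-1}` is a peak if
`σ_{j-1} < σ_j > σ_{j+1}` in one-line notation (so 0-based indices `j-2, j-1, j`). -/
def peaks (n : ℕ) (σ : Equiv.Perm (Fin n)) : Finset ℕ :=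
  (Finset.Icc 2 (n - 1)).filter (fun j =>
    ∃ (h1 : j - 2 < n) (h2 : j - 1 < n) (h3 : j < n),
      σ ⟨j - 2, h1⟩ < σ ⟨j - 1, h2⟩ ∧ σ ⟨j, h3⟩ < σ ⟨j - 1, h2⟩)

lemma peaks_mem_iff (n j : ℕ) (σ : Equiv.Perm (Fin n)) :
    j ∈ peaks n σ ↔ (2 ≤ j ∧ j ≤ n - 1) ∧
      ∃ (h1 : j - 2 < n) (h2 : j - 1 < n) (h3 : j < n),
        σ ⟨j - 2, h1⟩ < σ ⟨j - 1, h2⟩ ∧ σ ⟨j, h3⟩ < σ ⟨j - 1, h2⟩ := by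
  simp [peaks, Finset.mem_filter, Finset.mem_Icc]

lemma peaks_not_adjacent (n : ℕ) (σ : Equiv.Perm (Fin n)) (j : ℕ)
    (hj : j ∈ peaks n σ) : j + 1 ∉ peaks n σ := by
  rw [peaks_mem_iff] at hj
  rw [peaks_mem_iff]
  rintro ⟨⟨hb2, hb3⟩, h1, h2, h3, hA, hB⟩
  obtain ⟨⟨hj2, hj3⟩, g1, g2, g3, gA, gB⟩ := hj
  have e1 : j + 1 - 2 = j - 1 := by omega
  have e2 : j + 1 - 1 = j := by omega
  simp only [e1, e2] at hA
  exact absurd hA (not_lt.2 (le_of_lt gB))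

/-- card of strict upper triangle -/
lemma card_lt_pairs (n : ℕ) :
    ((Finset.univ : Finset (Fin n × Fin n)).filter fun p => p.1 < p.2).card
      = n * (n - 1) / 2 := by
  classical
  set P := ((Finset.univ : Finset (Fin n × Fin n)).filter fun p => p.1 < p.2) with hP
  set Q := ((Finset.univ : Finset (Fin n × Fin n)).filter fun p => p.2 < p.1) with hQ
  have hcardeq : P.card = Q.card := by
    apply Finset.card_bij (fun p _ => Prod.swap p)
    · intro p hp
      simp only [hP, hQ, Finset.mem_filter, Finset.mem_univ, true_and] at hp ⊢
      exact hp
    · intro p hp q hq h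
      exact Prod.swap_injective h
    · intro q hq
      refine ⟨Prod.swap q, ?_, by simp⟩
      simp only [hP, hQ, Finset.mem_filter, Finset.mem_univ, true_and] at hq ⊢
      exact hq
  have hunion : P ∪ Q = (Finset.univ : Finset (Fin n)).offDiag := by
    ext p
    simp only [hP, hQ, Finset.mem_union, Finset.mem_filter, Finset.mem_univ, true_and,
      Finset.mem_offDiag]
    constructor
    · rintro (h | h)
      · exact ne_of_lt h
      · exact (ne_of_lt h).symm
    · intro h
      rcases lt_or_gt_of_ne h with h' | h'
      · exact Or.inl h'
      · exact Or.inr h'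
  have hdisj : Disjoint P Q := by
    rw [Finset.disjoint_left]
    intro p hp hq
    simp only [hP, hQ, Finset.mem_filter] at hp hq
    exact absurd hq.2 (not_lt.2 (le_of_lt hp.2))
  have hoff : ((Finset.univ : Finset (Fin n)).offDiag).card = n * n - n := by
    rw [Finset.offDiag_card]
    simp [Finset.card_univ]
  have h2 : P.card + Q.card = n * n - n := by
    rw [← Finset.card_union_of_disjoint hdisj, hunion, hoff]
  have hm : n * n - n = n * (n - 1) := by cases n <;> simp [Nat.mul_sub, Nat.succ_mul] <;> ring_nf <;> omega
  have : 2 * P.card = n * (n - 1) := by omega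
  omega

/-- upper bound on the Kendall-Tau distance in `P(S;n)`. -/
theorem kendall_tau_le_on_peak_class (n : ℕ) (hn : 2 ≤ n) (S : Finset ℕ)
    (σ ρ : Equiv.Perm (Fin n)) (hσ : peaks n σ = S) (hρ : peaks n ρ = S) :
    dK n σ ρ ≤ n * (n - 1) / 2 - 2 * S.card := by
  classical
  set P := ((Finset.univ : Finset (Fin n × Fin n)).filter fun p => p.1 < p.2) with hPdef
  set G := P.filter (fun p => ((p.2 : Fin n) : ℕ) = ((p.1 : Fin n) : ℕ) + 1 ∧
      ((((p.1 : Fin n) : ℕ) + 2 ∈ S) ∨ (((p.1 : Fin n) : ℕ) + 1 ∈ S))) with hGdef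
  set D := (Finset.univ.filter (fun p : Fin n × Fin n =>
    p.1 < p.2 ∧ (((σ p.1 : ℕ) : ℤ) - ((σ p.2 : ℕ) : ℤ)) *
      (((ρ p.1 : ℕ) : ℤ) - ((ρ p.2 : ℕ) : ℤ)) < 0)) with hDdef
  -- D is disjoint from G, D ⊆ P
  have hDP : D ⊆ P \ G := by
    intro p hp
    simp only [hDdef, Finset.mem_filter, Finset.mem_univ, true_and] at hp
    obtain ⟨hlt, hneg⟩ := hp
    rw [Finset.mem_sdiff]
    constructor
    · simp [hPdef, hlt]
    · intro hG
      simp only [hGdef, Finset.mem_filter] at hG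
      obtain ⟨-, hval, hcase⟩ := hG
      rcases hcase with hc | hc
      · -- ascent at both: j = p.1.val + 2 is a peak of σ and ρ
        have hσp : σ p.1 < σ p.2 := by
          have := (peaks_mem_iff n _ σ).1 (hσ ▸ hc)
          obtain ⟨-, h1, h2, h3, hA, -⟩ := this
          have e1 : (p.1 : ℕ) + 2 - 2 = (p.1 : ℕ) := by omega
          have e2 : (p.1 : ℕ) + 2 - 1 = (p.1 : ℕ) + 1 := by omega
          simp only [e1, e2] at hA
          have ep1 : (⟨(p.1 : ℕ), by omega⟩ : Fin n) = p.1 := by ext; rfl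
          have ep2 : (⟨(p.1 : ℕ) + 1, by omega⟩ : Fin n) = p.2 := by ext; simp [hval]
          rwa [ep1, ep2] at hA
        have hρp : ρ p.1 < ρ p.2 := by
          have := (peaks_mem_iff n _ ρ).1 (hρ ▸ hc)
          obtain ⟨-, h1, h2, h3, hA, -⟩ := this
          have e1 : (p.1 : ℕ) + 2 - 2 = (p.1 : ℕ) := by omega
          have e2 : (p.1 : ℕ) + 2 - 1 = (p.1 : ℕ) + 1 := by omega
          simp only [e1, e2] at hA
          have ep1 : (⟨(p.1 : ℕ), by omega⟩ : Fin n) = p.1 := by ext; rfl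
          have ep2 : (⟨(p.1 : ℕ) + 1, by omega⟩ : Fin n) = p.2 := by ext; simp [hval]
          rwa [ep1, ep2] at hA
        have h1 : (((σ p.1 : ℕ) : ℤ) - ((σ p.2 : ℕ) : ℤ)) < 0 := by
          have : (σ p.1 : ℕ) < (σ p.2 : ℕ) := hσp
          omega
        have h2 : (((ρ p.1 : ℕ) : ℤ) - ((ρ p.2 : ℕ) : ℤ)) < 0 := by
          have : (ρ p.1 : ℕ) < (ρ p.2 : ℕ) := hρp
          omega
        exact absurd hneg (not_lt.2 (le_of_lt (mul_pos_of_neg_of_neg h1 h2)))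
      · -- descent at both: j = p.1.val + 1 is a peak of σ and ρ
        have hσp : σ p.2 < σ p.1 := by
          have := (peaks_mem_iff n _ σ).1 (hσ ▸ hc)
          obtain ⟨-, h1, h2, h3, -, hB⟩ := this
          have e2 : (p.1 : ℕ) + 1 - 1 = (p.1 : ℕ) := by omega
          simp only [e2] at hB
          have ep1 : (⟨(p.1 : ℕ), by omega⟩ : Fin n) = p.1 := by ext; rfl
          have ep2 : (⟨(p.1 : ℕ) + 1, by omega⟩ : Fin n) = p.2 := by ext; simp [hval]
          rwa [ep1, ep2] at hB
        have hρp : ρ p.2 < ρ p.1 := by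
          have := (peaks_mem_iff n _ ρ).1 (hρ ▸ hc)
          obtain ⟨-, h1, h2, h3, -, hB⟩ := this
          have e2 : (p.1 : ℕ) + 1 - 1 = (p.1 : ℕ) := by omega
          simp only [e2] at hB
          have ep1 : (⟨(p.1 : ℕ), by omega⟩ : Fin n) = p.1 := by ext; rfl
          have ep2 : (⟨(p.1 : ℕ) + 1, by omega⟩ : Fin n) = p.2 := by ext; simp [hval]
          rwa [ep1, ep2] at hB
        have h1 : 0 < (((σ p.1 : ℕ) : ℤ) - ((σ p.2 : ℕ) : ℤ)) := by
          have : (σ p.2 : ℕ) < (σ p.1 : ℕ) := hσp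
          omega
        have h2 : 0 < (((ρ p.1 : ℕ) : ℤ) - ((ρ p.2 : ℕ) : ℤ)) := by
          have : (ρ p.2 : ℕ) < (ρ p.1 : ℕ) := hρp
          omega
        exact absurd hneg (not_lt.2 (le_of_lt (mul_pos h1 h2)))
  -- lower bound on G.card
  have hGcard : 2 * S.card ≤ G.card := by
    set I := G.image (fun p => ((p.1 : Fin n) : ℕ)) with hIdef
    have hIcard : I.card = G.card := by
      apply Finset.card_image_of_injOn
      intro p hp q hq h
      simp only [Finset.mem_coe, hGdef, Finset.mem_filter] at hp hq
      have h' : ((p.1 : Fin n) : ℕ) = ((q.1 : Fin n) : ℕ) := h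
      have h2 : ((p.2 : Fin n) : ℕ) = ((q.2 : Fin n) : ℕ) := by
        rw [hp.2.1, hq.2.1, h']
      exact Prod.ext (Fin.ext h') (Fin.ext h2)
    set A := S.image (fun j => j - 2) with hAdef
    set B := S.image (fun j => j - 1) with hBdef
    have hSrange : ∀ j ∈ S, 2 ≤ j ∧ j ≤ n - 1 := by
      intro j hj
      exact ((peaks_mem_iff n j σ).1 (hσ ▸ hj)).1
    have hAcard : A.card = S.card := by
      apply Finset.card_image_of_injOn
      intro a ha b hb h
      have h' : a - 2 = b - 2 := h
      have := hSrange a ha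
      have := hSrange b hb
      omega
    have hBcard : B.card = S.card := by
      apply Finset.card_image_of_injOn
      intro a ha b hb h
      have h' : a - 1 = b - 1 := h
      have := hSrange a ha
      have := hSrange b hb
      omega
    have hABdisj : Disjoint A B := by
      rw [Finset.disjoint_left]
      intro a ha hb
      simp only [hAdef, hBdef, Finset.mem_image] at ha hb
      obtain ⟨j, hj, rfl⟩ := ha
      obtain ⟨j', hj', hj'e⟩ := hb
      have hjr := hSrange j hj
      have hjr' := hSrange j' hj'
      have : j' + 1 = j := by omega
      exact peaks_not_adjacent n σ j' (hσ ▸ hj') (this.symm ▸ (hσ ▸ hj))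
    have hAI : A ⊆ I := by
      intro a ha
      simp only [hAdef, Finset.mem_image] at ha
      obtain ⟨j, hj, rfl⟩ := ha
      have hjr := hSrange j hj
      simp only [hIdef, Finset.mem_image]
      refine ⟨(⟨j - 2, by omega⟩, ⟨j - 1, by omega⟩), ?_, rfl⟩
      simp only [hGdef, hPdef, Finset.mem_filter, Finset.mem_univ, true_and]
      refine ⟨?_, by omega, Or.inl ?_⟩
      · show (⟨j - 2, _⟩ : Fin n) < ⟨j - 1, _⟩
        simp only [Fin.mk_lt_mk]
        omega
      · have : j - 2 + 2 = j := by omega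
        rw [this]; exact hj
    have hBI : B ⊆ I := by
      intro a ha
      simp only [hBdef, Finset.mem_image] at ha
      obtain ⟨j, hj, rfl⟩ := ha
      have hjr := hSrange j hj
      simp only [hIdef, Finset.mem_image]
      refine ⟨(⟨j - 1, by omega⟩, ⟨j, by omega⟩), ?_, rfl⟩
      simp only [hGdef, hPdef, Finset.mem_filter, Finset.mem_univ, true_and]
      refine ⟨?_, by omega, Or.inr ?_⟩
      · show (⟨j - 1, _⟩ : Fin n) < ⟨j, _⟩
        simp only [Fin.mk_lt_mk]
        omega
      · have : j - 1 + 1 = j := by omega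
        rw [this]; exact hj
    calc 2 * S.card = A.card + B.card := by omega
      _ = (A ∪ B).card := (Finset.card_union_of_disjoint hABdisj).symm
      _ ≤ I.card := Finset.card_le_card (Finset.union_subset hAI hBI)
      _ = G.card := hIcard
  have hGP : G ⊆ P := Finset.filter_subset _ _
  have hstep : dK n σ ρ ≤ P.card - G.card := by
    have : dK n σ ρ = D.card := rfl
    rw [this]
    calc D.card ≤ (P \ G).card := Finset.card_le_card hDP
      _ = P.card - G.card := Finset.card_sdiff_of_subset hGP
  have hPcard : P.card = n * (n - 1) / 2 := card_lt_pairs n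
  rw [hPcard] at hstep
  exact le_trans hstep (Nat.sub_le_sub_left hGcard _)
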